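/- Let (X, μ_X) be δ-regular up to scale L^{−K} with constant C_R, 0 < δ < 1, and suppose L ≥ (4C_R)^{6/(δ(1−δ))}. Then for each interval I in the base-L discretization tree with 0 ≤ H(I) < K, there exist two children I', I'' of I such that (1/2)C_R^{−2/δ} L^{−H(I)−2/3} ≤ |x' − x''| ≤ 2L^{−H(I)−2/3} for all x' ∈ I', x'' ∈ I''. -/

import Mathlib

open MeasureTheory

def IsDeltaRegular (X : Set ℝ) (μ : Measure ℝ) (δ C h : ℝ) : Prop :=
  (∀ a b : ℝ, h ≤ b - a → μ (Set.Icc a b) ≤ ENNReal.ofReal (C * (b - a) ^ δ)) ∧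
  (∀ x r : ℝ, x ∈ X → h ≤ 2 * r → 2 * r ≤ 1 →
    ENNReal.ofReal (C⁻¹ * (2 * r) ^ δ) ≤ μ (Set.Icc (x - r) (x + r)))

/-- `[c,d]` is an interval of the base-`L` discretization of `μ` at height `k`:
endpoints in `L^{-k}ℤ`, every constituent subinterval of length `L^{-k}` has positive
measure, and the adjacent intervals of length `L^{-k}` have zero measure. -/
def MemVk (μ : Measure ℝ) (L : ℕ) (k : ℕ) (c d : ℝ) : Prop :=
  (∃ m : ℤ, c = (m : ℝ) * (L : ℝ) ^ (-(k : ℤ))) ∧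
  (∃ m : ℤ, d = (m : ℝ) * (L : ℝ) ^ (-(k : ℤ))) ∧ c < d ∧
  (∀ m : ℤ, c ≤ (m : ℝ) * (L : ℝ) ^ (-(k : ℤ)) →
    (m : ℝ) * (L : ℝ) ^ (-(k : ℤ)) < d →
    0 < μ (Set.Icc ((m : ℝ) * (L : ℝ) ^ (-(k : ℤ)))
      (((m : ℝ) + 1) * (L : ℝ) ^ (-(k : ℤ))))) ∧
  μ (Set.Icc (c - (L : ℝ) ^ (-(k : ℤ))) c) = 0 ∧
  μ (Set.Icc d (d + (L : ℝ) ^ (-(k : ℤ)))) = 0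


open MeasureTheory
open scoped ENNReal NNReal
set_option maxHeartbeats 1000000

lemma run_length_bound (μ : Measure ℝ) (X : Set ℝ)
    {δ C h ℓ : ℝ} (hδ0 : 0 < δ) (hδ1 : δ < 1) (hC : 1 ≤ C)
    (hupper : ∀ a b : ℝ, h ≤ b - a → μ (Set.Icc a b) ≤ ENNReal.ofReal (C * (b - a) ^ δ))
    (hlower : ∀ x r : ℝ, x ∈ X → h ≤ 2 * r → 2 * r ≤ 1 →
      ENNReal.ofReal (C⁻¹ * (2 * r) ^ δ) ≤ μ (Set.Icc (x - r) (x + r)))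
    (hℓ0 : 0 < ℓ) (hℓ1 : ℓ ≤ 1) (hhℓ : h ≤ ℓ)
    {a b : ℤ} (hab : a ≤ b)
    (hcell : ∀ j : ℤ, a ≤ j → j ≤ b → ∃ x, x ∈ X ∧ x ∈ Set.Icc ((j:ℝ) * ℓ) (((j:ℝ)+1) * ℓ))
    (hleft : μ (Set.Icc (((a:ℝ)-1) * ℓ) ((a:ℝ) * ℓ)) = 0)
    (hright : μ (Set.Icc (((b:ℝ)+1) * ℓ) (((b:ℝ)+2) * ℓ)) = 0) :
    ((b + 1 - a : ℤ) : ℝ) ≤ (3 * C ^ 2) ^ ((1:ℝ) / (1 - δ)) := by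
  classical
  have hC0 : (0:ℝ) < C := lt_of_lt_of_le one_pos hC
  set n : ℕ := (b + 1 - a).toNat with hn
  have hn1 : 1 ≤ n := by omega
  have hncast : ((n:ℤ)) = b + 1 - a := by omega
  set N : ℕ := (n + 2) / 3 with hN
  -- choose points
  have hcell' : ∀ j : ℤ, ∃ x : ℝ, (a ≤ j ∧ j ≤ b) → (x ∈ X ∧ x ∈ Set.Icc ((j:ℝ) * ℓ) (((j:ℝ)+1) * ℓ)) := by
    intro j
    by_cases hj : a ≤ j ∧ j ≤ b
    · obtain ⟨x, hx⟩ := hcell j hj.1 hj.2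
      exact ⟨x, fun _ => hx⟩
    · exact ⟨0, fun hc => absurd hc hj⟩
  choose x hx using hcell'
  set ball : ℕ → Set ℝ := fun i => Set.Icc (x (a + 3*i) - ℓ/2) (x (a + 3*i) + ℓ/2) with hball
  have hidx : ∀ i : ℕ, i < N → a ≤ a + 3*(i:ℤ) ∧ a + 3*(i:ℤ) ≤ b := by
    intro i hi
    constructor
    · omega
    · have : 3 * i ≤ n - 1 := by omega
      omega
  have hxmem : ∀ i : ℕ, i < N → x (a + 3*i) ∈ X ∧
      x (a + 3*i) ∈ Set.Icc (((a + 3*(i:ℤ) : ℤ):ℝ) * ℓ) ((((a + 3*(i:ℤ) : ℤ):ℝ)+1) * ℓ) :=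
    fun i hi => hx _ (hidx i hi)
  -- pairwise disjoint
  have hkeydis : ∀ i i' : ℕ, i < N → i' < N → i < i' → Disjoint (ball i) (ball i') := by
    intro i i' hi hi' hlt
    have h1 := (hxmem i hi).2
    have h2 := (hxmem i' hi').2
    simp only [Set.mem_Icc] at h1 h2
    push_cast at h1 h2
    apply Set.disjoint_left.mpr
    intro z hz1 hz2
    simp only [hball, Set.mem_Icc] at hz1 hz2
    have hii' : (i:ℝ) + 1 ≤ (i':ℝ) := by exact_mod_cast hlt
    nlinarith [hℓ0, mul_le_mul_of_nonneg_right
      (show (a:ℝ)+3*(i:ℝ)+3 ≤ (a:ℝ)+3*(i':ℝ) by linarith) hℓ0.le]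
  have hdisj : (↑(Finset.range N) : Set ℕ).PairwiseDisjoint ball := by
    intro i hi i' hi' hne
    simp only [Finset.coe_range, Set.mem_Iio] at hi hi'
    rcases lt_or_gt_of_ne hne with hlt | hlt
    · exact hkeydis i i' hi hi' hlt
    · exact (hkeydis i' i hi' hi hlt).symm
  -- sum of balls
  have hmeas : ∀ i ∈ Finset.range N, MeasurableSet (ball i) := fun i _ => measurableSet_Icc
  have hsum : μ (⋃ i ∈ Finset.range N, ball i) = ∑ i ∈ Finset.range N, μ (ball i) :=
    measure_biUnion_finset hdisj hmeas
  -- lower bound each ball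
  have hballlow : ∀ i ∈ Finset.range N, ENNReal.ofReal (C⁻¹ * ℓ ^ δ) ≤ μ (ball i) := by
    intro i hi
    have hi' := Finset.mem_range.mp hi
    have hX := (hxmem i hi').1
    have := hlower (x (a + 3*i)) (ℓ/2) hX (by linarith) (by linarith)
    rwa [show 2 * (ℓ/2) = ℓ by ring] at this
  -- union is inside the big interval
  have hsub : (⋃ i ∈ Finset.range N, ball i) ⊆ Set.Icc (((a:ℝ)-1) * ℓ) (((b:ℝ)+2) * ℓ) := by
    intro z hz
    simp only [Set.mem_iUnion, exists_prop] at hz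
    obtain ⟨i, hi, hzi⟩ := hz
    have hi' := Finset.mem_range.mp hi
    have h1 := (hxmem i hi').2
    have hid := hidx i hi'
    simp only [Set.mem_Icc] at h1 ⊢
    simp only [hball, Set.mem_Icc] at hzi
    push_cast at h1
    have hia : (a:ℝ) ≤ (a:ℝ) + 3*(i:ℝ) := by
      have := hid.1; exact_mod_cast (by exact_mod_cast this : ((a:ℤ):ℝ) ≤ ((a + 3*(i:ℤ) : ℤ):ℝ))
    have hib : (a:ℝ) + 3*(i:ℝ) ≤ (b:ℝ) := by
      have := hid.2; exact_mod_cast (by exact_mod_cast this : ((a + 3*(i:ℤ) : ℤ):ℝ) ≤ ((b:ℤ):ℝ))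
    constructor
    · nlinarith [hℓ0, mul_le_mul_of_nonneg_right hia hℓ0.le]
    · nlinarith [hℓ0, mul_le_mul_of_nonneg_right
        (show (a:ℝ)+3*(i:ℝ)+1 ≤ (b:ℝ)+1 by linarith) hℓ0.le]
  -- big interval measure bound
  have hbig : μ (Set.Icc (((a:ℝ)-1) * ℓ) (((b:ℝ)+2) * ℓ)) ≤ μ (Set.Icc ((a:ℝ) * ℓ) (((b:ℝ)+1) * ℓ)) := by
    calc μ (Set.Icc (((a:ℝ)-1) * ℓ) (((b:ℝ)+2) * ℓ))
        ≤ μ (Set.Icc (((a:ℝ)-1) * ℓ) ((a:ℝ) * ℓ) ∪ Set.Icc ((a:ℝ) * ℓ) (((b:ℝ)+2) * ℓ)) :=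
          measure_mono Set.Icc_subset_Icc_union_Icc
      _ ≤ μ (Set.Icc (((a:ℝ)-1) * ℓ) ((a:ℝ) * ℓ)) + μ (Set.Icc ((a:ℝ) * ℓ) (((b:ℝ)+2) * ℓ)) :=
          measure_union_le _ _
      _ = μ (Set.Icc ((a:ℝ) * ℓ) (((b:ℝ)+2) * ℓ)) := by rw [hleft, zero_add]
      _ ≤ μ (Set.Icc ((a:ℝ) * ℓ) (((b:ℝ)+1) * ℓ) ∪ Set.Icc (((b:ℝ)+1) * ℓ) (((b:ℝ)+2) * ℓ)) :=
          measure_mono Set.Icc_subset_Icc_union_Icc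
      _ ≤ μ (Set.Icc ((a:ℝ) * ℓ) (((b:ℝ)+1) * ℓ)) + μ (Set.Icc (((b:ℝ)+1) * ℓ) (((b:ℝ)+2) * ℓ)) :=
          measure_union_le _ _
      _ = μ (Set.Icc ((a:ℝ) * ℓ) (((b:ℝ)+1) * ℓ)) := by rw [hright, add_zero]
  have habR : (a:ℝ) ≤ (b:ℝ) := by exact_mod_cast hab
  have hlen0 : (0:ℝ) ≤ ((b:ℝ)+1) * ℓ - (a:ℝ) * ℓ := by nlinarith
  have hup : μ (Set.Icc ((a:ℝ) * ℓ) (((b:ℝ)+1) * ℓ)) ≤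
      ENNReal.ofReal (C * ((((b:ℝ)+1) * ℓ) - ((a:ℝ)*ℓ)) ^ δ) := by
    apply hupper
    nlinarith
  have hchain : (N : ℝ≥0∞) * ENNReal.ofReal (C⁻¹ * ℓ ^ δ) ≤
      ENNReal.ofReal (C * ((((b:ℝ)+1) * ℓ) - ((a:ℝ)*ℓ)) ^ δ) := by
    calc (N : ℝ≥0∞) * ENNReal.ofReal (C⁻¹ * ℓ ^ δ)
        = ∑ _i ∈ Finset.range N, ENNReal.ofReal (C⁻¹ * ℓ ^ δ) := by
          rw [Finset.sum_const, Finset.card_range, nsmul_eq_mul]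
      _ ≤ ∑ i ∈ Finset.range N, μ (ball i) := Finset.sum_le_sum hballlow
      _ = μ (⋃ i ∈ Finset.range N, ball i) := hsum.symm
      _ ≤ μ (Set.Icc (((a:ℝ)-1) * ℓ) (((b:ℝ)+2) * ℓ)) := measure_mono hsub
      _ ≤ _ := hbig.trans hup
  have hreal : (N:ℝ) * (C⁻¹ * ℓ ^ δ) ≤ C * ((((b:ℝ)+1) * ℓ) - ((a:ℝ)*ℓ)) ^ δ := by
    rw [← ENNReal.ofReal_natCast N, ← ENNReal.ofReal_mul (by positivity)] at hchain
    exact (ENNReal.ofReal_le_ofReal_iff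
      (mul_nonneg (le_of_lt hC0) (Real.rpow_nonneg hlen0 δ))).mp hchain
  -- real algebra
  set t : ℝ := (b:ℝ) + 1 - (a:ℝ) with ht
  have ht1 : (1:ℝ) ≤ t := by simp only [ht]; linarith
  have ht0 : (0:ℝ) < t := by linarith
  have htℓ : ((b:ℝ)+1) * ℓ - (a:ℝ)*ℓ = t * ℓ := by ring
  rw [htℓ, Real.mul_rpow (by linarith) hℓ0.le] at hreal
  have h3N : t ≤ 3 * (N:ℝ) := by
    have h1 : n ≤ 3 * N := by omega
    have h2 : (n:ℝ) = t := by
      rw [ht]; exact_mod_cast hncast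
    calc t = (n:ℝ) := h2.symm
      _ ≤ 3 * (N:ℝ) := by exact_mod_cast h1
  have hℓδ : (0:ℝ) < ℓ ^ δ := Real.rpow_pos_of_pos hℓ0 δ
  have htδ : (0:ℝ) < t ^ δ := Real.rpow_pos_of_pos ht0 δ
  have hstep : t * C⁻¹ ≤ 3 * C * t ^ δ := by
    have h1 : t * (C⁻¹ * ℓ ^ δ) ≤ (3 * (N:ℝ)) * (C⁻¹ * ℓ ^ δ) :=
      mul_le_mul_of_nonneg_right h3N (by positivity)
    have h2 : (t * C⁻¹) * ℓ ^ δ ≤ (3 * C * t ^ δ) * ℓ ^ δ := by linarith [h1, hreal]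
    exact le_of_mul_le_mul_right h2 hℓδ
  have hstep2 : t ≤ 3 * C^2 * t ^ δ := by
    have h3 := mul_le_mul_of_nonneg_right hstep hC0.le
    have h4 : t * C⁻¹ * C = t := by field_simp
    rw [h4] at h3
    linarith [h3]
  have hkey : t ^ ((1:ℝ) - δ) ≤ 3 * C^2 := by
    have hsplit : t ^ ((1:ℝ) - δ) * t ^ δ = t := by
      rw [← Real.rpow_add ht0]; simp
    rw [← mul_le_mul_iff_left₀ htδ, hsplit]
    linarith [hstep2]
  have hfinal : t ≤ (3 * C^2) ^ ((1:ℝ) / (1 - δ)) := by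
    have h1δ : (0:ℝ) < 1 - δ := by linarith
    have hrw : (t ^ ((1:ℝ) - δ)) ^ ((1:ℝ) / (1 - δ)) = t := by
      rw [← Real.rpow_mul ht0.le, mul_one_div, div_self (ne_of_gt h1δ), Real.rpow_one]
    calc t = (t ^ ((1:ℝ) - δ)) ^ ((1:ℝ) / (1 - δ)) := hrw.symm
      _ ≤ (3 * C^2) ^ ((1:ℝ) / (1 - δ)) :=
        Real.rpow_le_rpow (Real.rpow_nonneg ht0.le _) hkey (le_of_lt (div_pos one_pos h1δ))
  calc ((b + 1 - a : ℤ) : ℝ) = t := by push_cast; ring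
    _ ≤ _ := hfinal

lemma cover_cells {ℓ : ℝ} (hℓ : 0 < ℓ) (M : ℤ) :
    ∀ n : ℕ, 0 < n → Set.Icc ((M:ℝ)*ℓ) (((M:ℝ)+n)*ℓ) ⊆
      ⋃ i ∈ Finset.range n, Set.Icc (((M:ℝ)+i)*ℓ) (((M:ℝ)+i+1)*ℓ) := by
  intro n hn
  induction n with
  | zero => omega
  | succ m ih =>
    rcases Nat.eq_zero_or_pos m with hm | hm
    · subst hm
      intro x hx
      simp only [Finset.range_one, Finset.mem_singleton, Set.mem_iUnion]
      refine ⟨0, by simp, ?_⟩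
      push_cast at hx ⊢
      simpa using hx
    · have hsub : Set.Icc ((M:ℝ)*ℓ) (((M:ℝ)+(m+1:ℕ))*ℓ) ⊆
          Set.Icc ((M:ℝ)*ℓ) (((M:ℝ)+m)*ℓ) ∪ Set.Icc (((M:ℝ)+m)*ℓ) (((M:ℝ)+m+1)*ℓ) := by
        have hcst : ((M:ℝ)+((m+1:ℕ):ℝ))*ℓ = ((M:ℝ)+m+1)*ℓ := by push_cast; ring
        rw [hcst]
        exact Set.Icc_subset_Icc_union_Icc
      intro x hx
      rcases hsub hx with h | h
      · have := ih hm h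
        simp only [Set.mem_iUnion, exists_prop] at this ⊢
        obtain ⟨i, hi, hxi⟩ := this
        have hi' := Finset.mem_range.mp hi
        exact ⟨i, Finset.mem_range.mpr (by omega), hxi⟩
      · simp only [Set.mem_iUnion, exists_prop]
        exact ⟨m, Finset.mem_range.mpr (by omega), h⟩

lemma exists_pos_cell (μ : Measure ℝ) {ℓ : ℝ} (hℓ : 0 < ℓ) (M : ℤ) (n : ℕ) (hn : 0 < n)
    (S : Set ℝ) (hpos : 0 < μ (S ∩ Set.Icc ((M:ℝ)*ℓ) (((M:ℝ)+n)*ℓ))) :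
    ∃ j : ℤ, M ≤ j ∧ j < M + n ∧ 0 < μ (S ∩ Set.Icc ((j:ℝ)*ℓ) (((j:ℝ)+1)*ℓ)) := by
  by_contra hcon
  push_neg at hcon
  have hzero : ∀ i ∈ Finset.range n, μ (S ∩ Set.Icc (((M:ℝ)+i)*ℓ) (((M:ℝ)+i+1)*ℓ)) = 0 := by
    intro i hi
    have h := hcon (M + i) (by omega) (by simp only [Finset.mem_range] at hi; omega)
    have hc : ((M + (i:ℤ) : ℤ) : ℝ) = (M:ℝ) + i := by push_cast; ring
    rw [hc] at h
    exact le_antisymm h zero_le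
  have hsub : S ∩ Set.Icc ((M:ℝ)*ℓ) (((M:ℝ)+n)*ℓ) ⊆
      ⋃ i ∈ Finset.range n, S ∩ Set.Icc (((M:ℝ)+i)*ℓ) (((M:ℝ)+i+1)*ℓ) := by
    intro x ⟨hxS, hxI⟩
    have := cover_cells hℓ M n hn hxI
    simp only [Set.mem_iUnion, exists_prop] at this ⊢
    obtain ⟨i, hi, hxi⟩ := this
    exact ⟨i, hi, hxS, hxi⟩
  have := (measure_mono (μ := μ) hsub).trans (measure_biUnion_finset_le (μ := μ) (Finset.range n) _)
  rw [Finset.sum_eq_zero hzero] at this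
  exact absurd (le_antisymm this zero_le) (ne_of_gt hpos)

lemma run_exists (P : ℤ → Prop) {A B m₀ : ℤ}
    (hm : P m₀) (hA : ¬ P A) (hB : ¬ P B) (hAm : A < m₀) (hmB : m₀ < B) :
    ∃ a b : ℤ, A < a ∧ a ≤ m₀ ∧ m₀ ≤ b ∧ b < B ∧
      (∀ j, a ≤ j → j ≤ b → P j) ∧ ¬ P (a - 1) ∧ ¬ P (b + 1) := by
  classical
  have hA' : ∃ n : ℕ, ¬ P (m₀ - 1 - n) := by
    refine ⟨(m₀ - 1 - A).toNat, ?_⟩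
    rwa [Int.toNat_of_nonneg (by omega), show m₀ - 1 - (m₀ - 1 - A) = A by ring]
  have hB' : ∃ n : ℕ, ¬ P (m₀ + 1 + n) := by
    refine ⟨(B - m₀ - 1).toNat, ?_⟩
    rwa [Int.toNat_of_nonneg (by omega), show m₀ + 1 + (B - m₀ - 1) = B by ring]
  set n₁ := Nat.find hA' with hn₁
  set n₂ := Nat.find hB' with hn₂
  refine ⟨m₀ - n₁, m₀ + n₂, ?_, by omega, by omega, ?_, ?_, ?_, ?_⟩
  · -- A < m₀ - n₁
    by_contra hcon
    push_neg at hcon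
    have h1 : ((m₀ - 1 - A).toNat : ℤ) < (n₁ : ℤ) := by
      rw [Int.toNat_of_nonneg (by omega)]; omega
    have := Nat.find_min hA' (by exact_mod_cast h1)
    rw [Int.toNat_of_nonneg (by omega), show m₀ - 1 - (m₀ - 1 - A) = A by ring] at this
    exact this hA
  · -- m₀ + n₂ < B
    by_contra hcon
    push_neg at hcon
    have h1 : ((B - m₀ - 1).toNat : ℤ) < (n₂ : ℤ) := by
      rw [Int.toNat_of_nonneg (by omega)]; omega
    have := Nat.find_min hB' (by exact_mod_cast h1)
    rw [Int.toNat_of_nonneg (by omega), show m₀ + 1 + (B - m₀ - 1) = B by ring] at this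
    exact this hB
  · -- all cells positive
    intro j hj1 hj2
    rcases lt_trichotomy j m₀ with h | h | h
    · have h1 : ((m₀ - 1 - j).toNat : ℤ) < (n₁ : ℤ) := by
        rw [Int.toNat_of_nonneg (by omega)]; omega
      have := Nat.find_min hA' (by exact_mod_cast h1)
      rw [Int.toNat_of_nonneg (by omega), show m₀ - 1 - (m₀ - 1 - j) = j by ring] at this
      exact not_not.mp this
    · exact h ▸ hm
    · have h1 : ((j - m₀ - 1).toNat : ℤ) < (n₂ : ℤ) := by
        rw [Int.toNat_of_nonneg (by omega)]; omega
      have := Nat.find_min hB' (by exact_mod_cast h1)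
      rw [Int.toNat_of_nonneg (by omega), show m₀ + 1 + (j - m₀ - 1) = j by ring] at this
      exact not_not.mp this
  · have := Nat.find_spec hA'
    rwa [show m₀ - 1 - (n₁ : ℤ) = m₀ - n₁ - 1 by ring] at this
  · have := Nat.find_spec hB'
    rwa [show m₀ + 1 + (n₂ : ℤ) = m₀ + n₂ + 1 by ring] at this

lemma master_ineq (δ C : ℝ) (L : ℕ) (hδ0 : 0 < δ) (hδ1 : δ < 1) (hC : 1 ≤ C)
    (hLbig : (4 * C) ^ ((6:ℝ) / (δ * (1 - δ))) ≤ (L : ℝ)) :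
    12 * (3 * C ^ 2) ^ ((1:ℝ) / (1 - δ)) * C ^ ((2:ℝ) / δ) ≤ (L : ℝ) ^ ((1:ℝ) / 3) := by
  have hC0 : (0:ℝ) < C := lt_of_lt_of_le one_pos hC
  have h1δ : (0:ℝ) < 1 - δ := by linarith
  have h4C1 : (1:ℝ) ≤ 4 * C := by linarith
  have h4C0 : (0:ℝ) < 4 * C := by linarith
  have hL0 : (0:ℝ) ≤ (L:ℝ) := by positivity
  -- step 1 : (4C)^(2/(δ(1-δ))) ≤ L^(1/3)
  have step1 : (4 * C) ^ ((2:ℝ) / (δ * (1 - δ))) ≤ (L : ℝ) ^ ((1:ℝ) / 3) := by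
    have h := Real.rpow_le_rpow (by positivity) hLbig (by norm_num : (0:ℝ) ≤ 1/3)
    rwa [← Real.rpow_mul h4C0.le,
      show (6:ℝ) / (δ * (1 - δ)) * (1/3) = (2:ℝ) / (δ * (1 - δ)) by ring] at h
  -- step 2 : exponent split
  have hexp : (2:ℝ) / (δ * (1 - δ)) = 2/δ + 2/(1-δ) := by
    field_simp
    ring
  have step2 : (4 * C) ^ ((2:ℝ) / (δ * (1 - δ)))
      = (4:ℝ) ^ ((2:ℝ)/δ) * C ^ ((2:ℝ)/δ) * ((4:ℝ) ^ ((2:ℝ)/(1-δ)) * C ^ ((2:ℝ)/(1-δ))) := by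
    rw [hexp, Real.rpow_add h4C0, Real.mul_rpow (by norm_num) hC0.le,
      Real.mul_rpow (by norm_num) hC0.le]
  -- compare the constants
  have hCpos1 : (0:ℝ) ≤ C ^ ((2:ℝ)/δ) := by positivity
  have hCpos2 : (0:ℝ) ≤ C ^ ((2:ℝ)/(1-δ)) := by positivity
  have h3C : (3 * C ^ 2) ^ ((1:ℝ) / (1 - δ)) = (3:ℝ) ^ ((1:ℝ)/(1-δ)) * C ^ ((2:ℝ)/(1-δ)) := by
    rw [Real.mul_rpow (by norm_num) (by positivity)]
    congr 1
    rw [← Real.rpow_natCast C 2, ← Real.rpow_mul hC0.le]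
    norm_num
    rw [div_eq_mul_inv]
  have h16 : ((4:ℝ)) ^ ((2:ℝ)/(1-δ)) = (16:ℝ) ^ ((1:ℝ)/(1-δ)) := by
    rw [show (16:ℝ) = (4:ℝ) ^ ((2:ℝ)) by norm_num [Real.rpow_natCast], ← Real.rpow_mul (by norm_num)]
    congr 1
    ring
  have hA : (12:ℝ) ≤ (4:ℝ) ^ ((2:ℝ)/δ) := by
    have h2δ : (2:ℝ) ≤ 2/δ := by
      rw [le_div_iff₀ hδ0]; nlinarith
    calc (12:ℝ) ≤ 16 := by norm_num
      _ = (4:ℝ) ^ ((2:ℝ)) := by norm_num [Real.rpow_natCast]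
      _ ≤ (4:ℝ) ^ ((2:ℝ)/δ) := Real.rpow_le_rpow_of_exponent_le (by norm_num) h2δ
  have hB : (3:ℝ) ^ ((1:ℝ)/(1-δ)) ≤ (16:ℝ) ^ ((1:ℝ)/(1-δ)) :=
    Real.rpow_le_rpow (by norm_num) (by norm_num) (le_of_lt (div_pos one_pos h1δ))
  have hconst : 12 * (3:ℝ) ^ ((1:ℝ)/(1-δ)) ≤ (4:ℝ) ^ ((2:ℝ)/δ) * (4:ℝ) ^ ((2:ℝ)/(1-δ)) := by
    rw [h16]
    exact mul_le_mul hA hB (by positivity) (by positivity)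
  calc 12 * (3 * C ^ 2) ^ ((1:ℝ) / (1 - δ)) * C ^ ((2:ℝ) / δ)
      = (12 * (3:ℝ) ^ ((1:ℝ)/(1-δ))) * (C ^ ((2:ℝ)/δ) * C ^ ((2:ℝ)/(1-δ))) := by
        rw [h3C]; ring
    _ ≤ ((4:ℝ) ^ ((2:ℝ)/δ) * (4:ℝ) ^ ((2:ℝ)/(1-δ))) * (C ^ ((2:ℝ)/δ) * C ^ ((2:ℝ)/(1-δ))) :=
        mul_le_mul_of_nonneg_right hconst (by positivity)
    _ = (4 * C) ^ ((2:ℝ) / (δ * (1 - δ))) := by rw [step2]; ring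
    _ ≤ (L : ℝ) ^ ((1:ℝ) / 3) := step1

theorem stmt18 (X : Set ℝ) (μX : Measure ℝ) (δ C_R : ℝ) (L K : ℕ)
    (hL : 2 ≤ L) (hK : 0 < K) (hδ0 : 0 < δ) (hδ1 : δ < 1) (hC : 1 ≤ C_R)
    (hX : IsCompact X) [IsFiniteMeasure μX] (hsupp : μX Xᶜ = 0)
    (hreg : IsDeltaRegular X μX δ C_R ((L : ℝ) ^ (-(K : ℤ))))
    (hLbig : (4 * C_R) ^ ((6 : ℝ) / (δ * (1 - δ))) ≤ (L : ℝ))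
    (k : ℕ) (hk : k < K) (c d : ℝ) (hI : MemVk μX L k c d) :
    ∃ c' d' c'' d'' : ℝ,
      MemVk μX L (k + 1) c' d' ∧ MemVk μX L (k + 1) c'' d'' ∧
      Set.Icc c' d' ⊆ Set.Icc c d ∧ Set.Icc c'' d'' ⊆ Set.Icc c d ∧
      ∀ x' ∈ Set.Icc c' d', ∀ x'' ∈ Set.Icc c'' d'',
        (1 / 2) * C_R ^ (-(2 / δ)) * (L : ℝ) ^ (-(k : ℝ) - 2 / 3) ≤ |x' - x''| ∧
        |x' - x''| ≤ 2 * (L : ℝ) ^ (-(k : ℝ) - 2 / 3) := by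
  classical
  obtain ⟨⟨mc, hmc⟩, ⟨md, hmd⟩, hcd, hpos, hleft0, hright0⟩ := hI
  have hC0 : (0:ℝ) < C_R := lt_of_lt_of_le one_pos hC
  have hLR0 : (0:ℝ) < (L:ℝ) := by positivity
  have hLR1 : (1:ℝ) < (L:ℝ) := by exact_mod_cast (by omega : 1 < L)
  -- scales
  set Λ : ℝ := (L:ℝ) ^ (-(k:ℤ)) with hΛdef
  set ρ : ℝ := (L:ℝ) ^ (-(k:ℝ) - 2/3) with hρdef
  set C2 : ℝ := C_R ^ (-(2/δ)) with hC2def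
  set Cp : ℝ := C_R ^ ((2:ℝ)/δ) with hCpdef
  set C' : ℝ := (3 * C_R ^ 2) ^ ((1:ℝ)/(1-δ)) with hC'def
  set u : ℝ := (L:ℝ) ^ ((1:ℝ)/3) with hudef
  set ℓ : ℝ := (L:ℝ) ^ (-(k:ℤ) - 1) with hℓdef
  have hΛ0 : 0 < Λ := by rw [hΛdef]; positivity
  have hℓ0 : 0 < ℓ := by rw [hℓdef]; positivity
  have hρ0 : 0 < ρ := by rw [hρdef]; positivity
  have hu0 : 0 < u := by rw [hudef]; positivity
  have hΛℓ : Λ = (L:ℝ) * ℓ := by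
    have h1 : (L:ℝ) * ℓ = (L:ℝ)^(1:ℤ) * (L:ℝ)^(-(k:ℤ)-1) := by rw [hℓdef, zpow_one]
    rw [h1, ← zpow_add₀ (ne_of_gt hLR0), hΛdef]
    congr 1
    ring
  have hℓk1 : (L:ℝ) ^ (-((k+1:ℕ):ℤ)) = ℓ := by
    rw [hℓdef, show (-((k+1:ℕ):ℤ)) = -(k:ℤ) - 1 by push_cast; ring]
  have hℓrpow : ℓ = (L:ℝ) ^ (-(k:ℝ) - 1) := by
    rw [hℓdef, ← Real.rpow_intCast (L:ℝ) (-(k:ℤ) - 1)]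
    congr 1
    push_cast
    ring
  have hΛrpow : Λ = (L:ℝ) ^ (-(k:ℝ)) := by
    rw [hΛdef, ← Real.rpow_intCast (L:ℝ) (-(k:ℤ))]
    congr 1
    push_cast
    ring
  have hℓρ : ℓ ≤ ρ := by
    rw [hℓrpow, hρdef]
    exact Real.rpow_le_rpow_of_exponent_le hLR1.le (by linarith only)
  have hρΛ : ρ ≤ Λ := by
    rw [hΛrpow, hρdef]
    exact Real.rpow_le_rpow_of_exponent_le hLR1.le (by linarith only)
  have hℓ1 : ℓ ≤ 1 := by
    rw [hℓrpow]
    apply Real.rpow_le_one_of_one_le_of_nonpos hLR1.le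
    have hk0 : (0:ℝ) ≤ (k:ℝ) := Nat.cast_nonneg k
    linarith only [hk0]
  have hKℓ : (L:ℝ) ^ (-(K:ℤ)) ≤ ℓ := by
    rw [hℓdef]
    apply zpow_le_zpow_right₀ hLR1.le
    omega
  have hℓu : ℓ * u = ρ := by
    rw [hℓrpow, hudef, hρdef, ← Real.rpow_add hLR0]
    congr 1
    ring
  -- master inequality
  have hmaster : 12 * C' * Cp ≤ u := master_ineq δ C_R L hδ0 hδ1 hC hLbig
  have hCp1 : 1 ≤ Cp := by
    rw [hCpdef]
    calc (1:ℝ) = C_R ^ (0:ℝ) := (Real.rpow_zero _).symm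
      _ ≤ C_R ^ ((2:ℝ)/δ) := Real.rpow_le_rpow_of_exponent_le hC (by positivity)
  have hC'1 : 1 ≤ C' := by
    rw [hC'def]
    calc (1:ℝ) = (3 * C_R ^ 2) ^ (0:ℝ) := (Real.rpow_zero _).symm
      _ ≤ (3 * C_R ^ 2) ^ ((1:ℝ)/(1-δ)) := by
          apply Real.rpow_le_rpow_of_exponent_le
            (by nlinarith only [hC, hC0, sq_nonneg (C_R - 1)])
          have : (0:ℝ) < 1 - δ := by linarith only [hδ1]
          positivity
  have hC2 : C2 = Cp⁻¹ := by rw [hC2def, hCpdef]; exact Real.rpow_neg hC0.le _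
  have hC20 : 0 < C2 := by rw [hC2]; positivity
  have hC21 : C2 ≤ 1 := by
    rw [hC2]
    exact inv_le_one_of_one_le₀ hCp1
  have hu12 : (12:ℝ) ≤ u := by nlinarith only [hmaster, hC'1, hCp1, hC20, hCp1]
  have hL23inv : (L:ℝ) ^ (-(2:ℝ)/3) * (u * u) = 1 := by
    rw [hudef, ← Real.rpow_add hLR0, ← Real.rpow_add hLR0]
    norm_num
  have huu144 : (144:ℝ) ≤ u * u := by nlinarith only [hu12, hu0]
  have huu0 : (0:ℝ) < u * u := mul_pos hu0 hu0
  have hL23 : (L:ℝ) ^ (-(2:ℝ)/3) ≤ 1/144 := by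
    have h1 : (L:ℝ) ^ (-(2:ℝ)/3) = (u * u)⁻¹ := eq_inv_of_mul_eq_one_left hL23inv
    rw [h1]
    calc (u*u)⁻¹ ≤ (144:ℝ)⁻¹ := by
          apply inv_anti₀ (by norm_num) huu144
      _ = 1/144 := by norm_num
  have hρL23 : ρ ≤ (L:ℝ) ^ (-(2:ℝ)/3) := by
    rw [hρdef]
    apply Real.rpow_le_rpow_of_exponent_le hLR1.le
    have : (0:ℝ) ≤ (k:ℝ) := Nat.cast_nonneg k
    linarith
  have h3ρ1 : 3 * ρ ≤ 1 := by linarith only [hρL23, hL23]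
  have hΛρ : Λ * (L:ℝ) ^ (-(2:ℝ)/3) = ρ := by
    rw [hΛrpow, hρdef, ← Real.rpow_add hLR0]
    congr 1
    ring
  have hrΛ : (3/2) * ρ ≤ Λ := by
    nlinarith only [hΛρ, hΛ0, mul_le_mul_of_nonneg_left hL23 hΛ0.le]
  have h2C'ℓ : 2 * C' * ℓ ≤ (1/6) * C2 * ρ := by
    have h5 : 12 * C' * Cp * ℓ ≤ u * ℓ := mul_le_mul_of_nonneg_right hmaster hℓ0.le
    have h5' : u * ℓ = ρ := by rw [mul_comm]; exact hℓu
    have h6 := mul_le_mul_of_nonneg_left (h5.trans_eq h5') hC20.le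
    have h7 : C2 * (12 * C' * Cp * ℓ) = 12 * C' * ℓ := by
      rw [hC2]
      field_simp
    rw [h7] at h6
    linarith only [h6]
  -- grid indices
  set Mc : ℤ := mc * L with hMcdef
  set Md : ℤ := md * L with hMddef
  have hcMc : c = (Mc:ℝ) * ℓ := by
    rw [hmc, hΛℓ, hMcdef]
    push_cast
    ring
  have hdMd : d = (Md:ℝ) * ℓ := by
    rw [hmd, hΛℓ, hMddef]
    push_cast
    ring
  have hmcmd : mc < md := by
    have h1 : (mc:ℝ) * Λ < (md:ℝ) * Λ := by rw [← hmc, ← hmd]; exact hcd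
    exact_mod_cast lt_of_mul_lt_mul_right h1 hΛ0.le
  have hMcMd : Mc + L ≤ Md := by
    rw [hMcdef, hMddef]
    have h1 : (mc + 1) * (L:ℤ) ≤ md * L := by
      apply mul_le_mul_of_nonneg_right (by omega) (by omega)
    rw [add_mul, one_mul] at h1
    omega
  have hcΛd : c + Λ ≤ d := by
    rw [hcMc, hdMd, hΛℓ]
    have hcst : ((Mc:ℝ) + L) ≤ (Md:ℝ) := by exact_mod_cast hMcMd
    have := mul_le_mul_of_nonneg_right hcst hℓ0.le
    linarith only [this]
  -- the predicate
  set P : ℤ → Prop := fun j => 0 < μX (Set.Icc ((j:ℝ) * ℓ) (((j:ℝ)+1) * ℓ)) with hPdef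
  -- point extraction
  have hXpt : ∀ s : Set ℝ, 0 < μX s → ∃ x, x ∈ X ∧ x ∈ s := by
    intro s hs
    have h3 : μX (s \ X) = 0 := measure_mono_null (fun z hz => hz.2) hsupp
    have h1 : μX (s ∩ X) ≠ 0 := by
      intro h0
      have h2 : μX s ≤ μX (s ∩ X) + μX (s \ X) := by
        refine le_trans (measure_mono ?_) (measure_union_le _ _)
        intro z hz
        by_cases hzX : z ∈ X
        · exact Or.inl ⟨hz, hzX⟩
        · exact Or.inr ⟨hz, hzX⟩
      rw [h0, h3, add_zero] at h2
      exact absurd (le_antisymm h2 zero_le) (ne_of_gt hs)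
    obtain ⟨x, hx⟩ := nonempty_of_measure_ne_zero h1
    exact ⟨x, hx.2, hx.1⟩
  -- MemVk builder
  have hmk : ∀ a b : ℤ, a ≤ b → (∀ j : ℤ, a ≤ j → j ≤ b → P j) → ¬ P (a-1) → ¬ P (b+1) →
      MemVk μX L (k+1) ((a:ℝ)*ℓ) (((b:ℝ)+1)*ℓ) := by
    intro a b hab hrun hPa hPb
    refine ⟨⟨a, by rw [hℓk1]⟩, ⟨b+1, by rw [hℓk1]; push_cast; ring⟩, ?_, ?_, ?_, ?_⟩
    · have : (a:ℝ) < (b:ℝ)+1 := by exact_mod_cast (by omega : a < b + 1)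
      exact mul_lt_mul_of_pos_right this hℓ0
    · intro m hm1 hm2
      rw [hℓk1] at hm1 hm2 ⊢
      have h1 : a ≤ m := by
        have h1R : (a:ℝ) ≤ (m:ℝ) := le_of_mul_le_mul_right hm1 hℓ0
        exact_mod_cast h1R
      have h2 : m ≤ b := by
        have h2R : (m:ℝ) < (b:ℝ)+1 := lt_of_mul_lt_mul_right hm2 hℓ0.le
        have h2Z : m < b + 1 := by exact_mod_cast (show (m:ℝ) < ((b+1:ℤ):ℝ) by push_cast; linarith)
        omega
      exact hrun m h1 h2
    · rw [hℓk1]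
      have h := le_zero_iff.mp (not_lt.mp hPa)
      have hc1 : ((a - 1 : ℤ):ℝ) * ℓ = (a:ℝ)*ℓ - ℓ := by push_cast; ring
      have hc2 : (((a - 1 : ℤ):ℝ) + 1) * ℓ = (a:ℝ)*ℓ := by push_cast; ring
      rw [hc1, hc2] at h
      exact h
    · rw [hℓk1]
      have h := le_zero_iff.mp (not_lt.mp hPb)
      have hc1 : ((b + 1 : ℤ):ℝ) * ℓ = ((b:ℝ)+1)*ℓ := by push_cast; ring
      have hc2 : (((b + 1 : ℤ):ℝ) + 1) * ℓ = ((b:ℝ)+1)*ℓ + ℓ := by push_cast; ring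
      rw [hc1, hc2] at h
      exact h
  -- first positive cell inside [c, c+Λ]
  have hfirst : 0 < μX (Set.univ ∩ Set.Icc ((Mc:ℝ)*ℓ) (((Mc:ℝ) + (L:ℕ))*ℓ)) := by
    rw [Set.univ_inter]
    have h1 := hpos mc (le_of_eq hmc) (by rw [← hmc]; exact hcd)
    have he1 : (mc:ℝ)*Λ = (Mc:ℝ)*ℓ := by rw [← hmc, hcMc]
    have he2 : ((mc:ℝ)+1)*Λ = ((Mc:ℝ) + (L:ℕ))*ℓ := by
      rw [hΛℓ, hMcdef]
      push_cast
      ring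
    rw [he1, he2] at h1
    exact h1
  obtain ⟨m₀, hm₀1, hm₀2, hm₀pos⟩ := exists_pos_cell μX hℓ0 Mc L (by omega) Set.univ hfirst
  rw [Set.univ_inter] at hm₀pos
  obtain ⟨x₀, hx₀X, hx₀cell⟩ := hXpt _ hm₀pos
  have hx₀mem := Set.mem_Icc.mp hx₀cell
  have hMcm₀R : (Mc:ℝ) ≤ (m₀:ℝ) := by exact_mod_cast hm₀1
  have hm₀McL : ((m₀:ℝ)+1) ≤ (Mc:ℝ) + (L:ℝ) := by
    exact_mod_cast (show ((m₀+1:ℤ):ℝ) ≤ ((Mc + (L:ℕ) : ℤ):ℝ) by exact_mod_cast (by omega : m₀ + 1 ≤ Mc + (L:ℕ)))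
  have hx₀c : c ≤ x₀ := by
    have h1 := mul_le_mul_of_nonneg_right hMcm₀R hℓ0.le
    rw [hcMc]
    linarith only [h1, hx₀mem.1]
  have hcΛeq : ((Mc:ℝ) + (L:ℝ))*ℓ = c + Λ := by rw [hcMc, hΛℓ]; ring
  have hx₀d : x₀ ≤ d := by
    have h1 := mul_le_mul_of_nonneg_right hm₀McL hℓ0.le
    linarith only [hx₀mem.2, h1, hcΛeq, hcΛd]
  -- annulus radii
  set r : ℝ := (3/2) * ρ with hrdef
  set r' : ℝ := (2/3) * C2 * ρ with hr'def
  have hr0 : 0 < r := by rw [hrdef]; linarith only [hρ0]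
  have hr'0 : 0 < r' := by
    rw [hr'def]
    nlinarith only [hC20, hρ0]
  have hr'r : r' ≤ r := by
    rw [hrdef, hr'def]
    nlinarith only [hρ0, mul_le_mul_of_nonneg_right hC21 hρ0.le]
  have h2req : 2*r = 3*ρ := by rw [hrdef]; ring
  have h2r'eq : 2*r' = (4/3)*C2*ρ := by rw [hr'def]; ring
  -- lower regularity on the big ball
  have hlow := hreg.2 x₀ r hx₀X
    (by linarith only [hKℓ, hℓρ, hρ0, h2req]) (by linarith only [h3ρ1, h2req])
  -- upper regularity on the small ball
  have hℓeq : ℓ = ρ * u⁻¹ := by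
    rw [← hℓu]
    field_simp
  have hCpu : Cp ≤ u := by nlinarith only [hmaster, hC'1, hCp1]
  have huinv : u⁻¹ ≤ C2 := by
    rw [hC2]
    exact inv_anti₀ (lt_of_lt_of_le one_pos hCp1) hCpu
  have hℓr' : ℓ ≤ (4/3)*C2*ρ := by
    have h1 := mul_le_mul_of_nonneg_left huinv hρ0.le
    rw [hℓeq]
    nlinarith only [h1, hC20, hρ0, mul_nonneg hC20.le hρ0.le]
  have hupp := hreg.1 (x₀ - r') (x₀ + r')
    (by linarith only [hKℓ, hℓr', h2r'eq, show x₀ + r' - (x₀ - r') = 2*r' by ring])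
  -- the strict real inequality
  have hρδ0 : (0:ℝ) < ρ^δ := Real.rpow_pos_of_pos hρ0 δ
  have hrealineq : C_R * (2*r')^δ < C_R⁻¹ * (2*r)^δ := by
    rw [h2req, h2r'eq]
    have hm1 : ((4/3)*C2*ρ)^δ = ((4/3):ℝ)^δ * (C2^δ * ρ^δ) := by
      rw [show ((4:ℝ)/3)*C2*ρ = ((4/3)*C2)*ρ by ring,
        Real.mul_rpow (by nlinarith only [hC20] : (0:ℝ) ≤ (4/3)*C2) hρ0.le,
        Real.mul_rpow (by norm_num) hC20.le]
      ring
    have hm2 : ((3:ℝ)*ρ)^δ = (3:ℝ)^δ * ρ^δ := Real.mul_rpow (by norm_num) hρ0.le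
    have hC2δ : C2^δ = (C_R^2)⁻¹ := by
      rw [hC2def, ← Real.rpow_mul hC0.le, show (-(2/δ))*δ = (-2:ℝ) by field_simp,
        show ((-2):ℝ) = -((2:ℕ):ℝ) by norm_num, Real.rpow_neg hC0.le, Real.rpow_natCast]
    rw [hm1, hm2, hC2δ]
    have h43 : ((4:ℝ)/3)^δ < (3:ℝ)^δ := Real.rpow_lt_rpow (by norm_num) (by norm_num) hδ0
    have hpos2 : (0:ℝ) < C_R⁻¹ * ρ^δ := by positivity
    calc C_R * (((4:ℝ)/3)^δ * ((C_R^2)⁻¹ * ρ^δ)) = (C_R⁻¹ * ρ^δ) * ((4:ℝ)/3)^δ := by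
          field_simp
      _ < (C_R⁻¹ * ρ^δ) * (3:ℝ)^δ := by exact mul_lt_mul_of_pos_left h43 hpos2
      _ = C_R⁻¹ * ((3:ℝ)^δ * ρ^δ) := by ring
  have hltμ : μX (Set.Icc (x₀-r') (x₀+r')) < μX (Set.Icc (x₀-r) (x₀+r)) := by
    calc μX (Set.Icc (x₀-r') (x₀+r')) ≤ ENNReal.ofReal (C_R * ((x₀+r') - (x₀-r'))^δ) := hupp
      _ = ENNReal.ofReal (C_R * (2*r')^δ) := by rw [show x₀+r'-(x₀-r') = 2*r' by ring]
      _ < ENNReal.ofReal (C_R⁻¹ * (2*r)^δ) := by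
          rw [ENNReal.ofReal_lt_ofReal_iff
            (mul_pos (inv_pos.mpr hC0) (Real.rpow_pos_of_pos (by linarith only [hr0]) δ))]
          exact hrealineq
      _ ≤ μX (Set.Icc (x₀-r) (x₀+r)) := hlow
  set A : Set ℝ := Set.Icc (x₀-r) (x₀+r) \ Set.Icc (x₀-r') (x₀+r') with hAdef
  have hannpos : 0 < μX A := by
    rw [hAdef, measure_diff
      (Set.Icc_subset_Icc (by linarith only [hr'r]) (by linarith only [hr'r]))
      measurableSet_Icc.nullMeasurableSet (measure_ne_top μX _)]
    exact tsub_pos_iff_lt.mpr hltμ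
  -- positive measure inside [c,d]
  have hAcd : 0 < μX (A ∩ Set.Icc c d) := by
    by_contra hcon
    have h0 : μX (A ∩ Set.Icc c d) = 0 := le_zero_iff.mp (not_lt.mp hcon)
    have hsub2 : A ⊆ (A ∩ Set.Icc c d) ∪ (Set.Icc (c-Λ) c ∪ Set.Icc d (d+Λ)) := by
      intro z hz
      have hz1 := Set.mem_Icc.mp hz.1
      by_cases hzc : c ≤ z
      · by_cases hzd : z ≤ d
        · exact Or.inl ⟨hz, Set.mem_Icc.mpr ⟨hzc, hzd⟩⟩
        · push_neg at hzd
          refine Or.inr (Or.inr (Set.mem_Icc.mpr ⟨le_of_lt hzd, ?_⟩))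
          linarith only [hz1.2, hx₀d, hrΛ, hrdef]
      · push_neg at hzc
        refine Or.inr (Or.inl (Set.mem_Icc.mpr ⟨?_, le_of_lt hzc⟩))
        linarith only [hz1.1, hx₀c, hrΛ, hrdef]
    have hm1 : μX A ≤ μX (A ∩ Set.Icc c d) + μX (Set.Icc (c-Λ) c ∪ Set.Icc d (d+Λ)) :=
      (measure_mono hsub2).trans (measure_union_le _ _)
    have hm2 : μX (Set.Icc (c-Λ) c ∪ Set.Icc d (d+Λ)) ≤
        μX (Set.Icc (c-Λ) c) + μX (Set.Icc d (d+Λ)) := measure_union_le _ _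
    have hzero : μX A ≤ 0 := by
      calc μX A ≤ μX (A ∩ Set.Icc c d) + μX (Set.Icc (c-Λ) c ∪ Set.Icc d (d+Λ)) := hm1
        _ ≤ μX (A ∩ Set.Icc c d) + (μX (Set.Icc (c-Λ) c) + μX (Set.Icc d (d+Λ))) :=
            add_le_add_right hm2 _
        _ = 0 := by rw [h0, hleft0, hright0]; simp
    exact absurd (le_antisymm hzero zero_le) (ne_of_gt hannpos)
  -- a positive cell meeting the annulus
  set nI : ℕ := (Md - Mc).toNat with hnIdef
  have hnI0 : 0 < nI := by omega
  have hnIZ : (nI:ℤ) = Md - Mc := by omega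
  have hnIcast : ((nI:ℝ)) = (Md:ℝ) - (Mc:ℝ) := by exact_mod_cast hnIZ
  have hIcc_cd : Set.Icc ((Mc:ℝ)*ℓ) (((Mc:ℝ) + (nI:ℝ))*ℓ) = Set.Icc c d := by
    rw [hcMc, hdMd, show (Mc:ℝ) + (nI:ℝ) = (Md:ℝ) by linarith only [hnIcast]]
  obtain ⟨j₁, hj₁1, hj₁2, hj₁pos⟩ :=
    exists_pos_cell μX hℓ0 Mc nI hnI0 A (by rw [hIcc_cd]; exact hAcd)
  have hPj₁ : 0 < μX (Set.Icc ((j₁:ℝ)*ℓ) (((j₁:ℝ)+1)*ℓ)) :=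
    lt_of_lt_of_le hj₁pos (measure_mono Set.inter_subset_right)
  obtain ⟨y, hy⟩ := nonempty_of_measure_ne_zero (ne_of_gt hj₁pos)
  have hyA : y ∈ A := hy.1
  have hycell := Set.mem_Icc.mp hy.2
  have hymem := Set.mem_Icc.mp hyA.1
  have hyup : |y - x₀| ≤ r :=
    abs_le.mpr ⟨by linarith only [hymem.1], by linarith only [hymem.2]⟩
  have hylow : r' < |y - x₀| := by
    have hnot : ¬ (x₀ - r' ≤ y ∧ y ≤ x₀ + r') := fun hcon2 => hyA.2 (Set.mem_Icc.mpr hcon2)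
    rcases not_and_or.mp hnot with h | h
    · push_neg at h
      rw [abs_sub_comm, abs_of_pos (by linarith only [h, hr'0])]
      linarith only [h]
    · push_neg at h
      rw [abs_of_pos (by linarith only [h, hr'0])]
      linarith only [h]
  -- boundary cells are null
  have hPMc : ¬ P (Mc - 1) := by
    intro hcon2
    have hcon3 : 0 < μX (Set.Icc (((Mc-1:ℤ):ℝ)*ℓ) ((((Mc-1:ℤ):ℝ)+1)*ℓ)) := hcon2
    have hsub3 : Set.Icc (((Mc-1:ℤ):ℝ)*ℓ) ((((Mc-1:ℤ):ℝ)+1)*ℓ) ⊆ Set.Icc (c-Λ) c := by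
      apply Set.Icc_subset_Icc
      · push_cast
        rw [hcMc]
        linarith only [hℓρ, hρΛ]
      · push_cast
        rw [hcMc]
        linarith only []
    have hz := measure_mono_null hsub3 hleft0
    exact (ne_of_gt hcon3) hz
  have hPMd : ¬ P Md := by
    intro hcon2
    have hcon3 : 0 < μX (Set.Icc ((Md:ℝ)*ℓ) (((Md:ℝ)+1)*ℓ)) := hcon2
    have hsub3 : Set.Icc ((Md:ℝ)*ℓ) (((Md:ℝ)+1)*ℓ) ⊆ Set.Icc d (d+Λ) := by
      apply Set.Icc_subset_Icc
      · rw [hdMd]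
      · rw [hdMd]
        linarith only [hℓρ, hρΛ]
    have hz := measure_mono_null hsub3 hright0
    exact (ne_of_gt hcon3) hz
  -- the two runs
  have hj₁Md : j₁ < Md := by omega
  obtain ⟨a₁, b₁, ha₁Mc, ha₁m₀, hm₀b₁, hb₁Md, hrun₁, hPa₁, hPb₁⟩ :=
    run_exists P hm₀pos hPMc hPMd (by omega) (by omega)
  obtain ⟨a₂, b₂, ha₂Mc, ha₂j₁, hj₁b₂, hb₂Md, hrun₂, hPa₂, hPb₂⟩ :=
    run_exists P hPj₁ hPMc hPMd (by omega) hj₁Md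
  have hmk₁ := hmk a₁ b₁ (by omega) hrun₁ hPa₁ hPb₁
  have hmk₂ := hmk a₂ b₂ (by omega) hrun₂ hPa₂ hPb₂
  -- lengths of the runs
  have hlen : ∀ a b : ℤ, a ≤ b → (∀ j : ℤ, a ≤ j → j ≤ b → P j) → ¬ P (a-1) → ¬ P (b+1) →
      ((b:ℝ) + 1 - (a:ℝ)) ≤ C' := by
    intro a b hab hrun hPa hPb
    have hXcell : ∀ j : ℤ, a ≤ j → j ≤ b → ∃ x, x ∈ X ∧ x ∈ Set.Icc ((j:ℝ)*ℓ) (((j:ℝ)+1)*ℓ) :=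
      fun j h1 h2 => hXpt _ (hrun j h1 h2)
    have hzleft : μX (Set.Icc (((a:ℝ)-1)*ℓ) ((a:ℝ)*ℓ)) = 0 := by
      have hPa' : ¬ (0 < μX (Set.Icc (((a-1:ℤ):ℝ)*ℓ) ((((a-1:ℤ):ℝ)+1)*ℓ))) := hPa
      have h := le_zero_iff.mp (not_lt.mp hPa')
      rw [show (((a - 1:ℤ):ℝ)) = (a:ℝ) - 1 by push_cast; ring,
        show (((a:ℝ) - 1) + 1) * ℓ = (a:ℝ)*ℓ by ring] at h
      exact h
    have hzright : μX (Set.Icc (((b:ℝ)+1)*ℓ) (((b:ℝ)+2)*ℓ)) = 0 := by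
      have hPb' : ¬ (0 < μX (Set.Icc (((b+1:ℤ):ℝ)*ℓ) ((((b+1:ℤ):ℝ)+1)*ℓ))) := hPb
      have h := le_zero_iff.mp (not_lt.mp hPb')
      rw [show (((b + 1:ℤ):ℝ)) = (b:ℝ) + 1 by push_cast; ring,
        show (((b:ℝ) + 1) + 1) * ℓ = ((b:ℝ)+2)*ℓ by ring] at h
      exact h
    have h1 := run_length_bound μX X hδ0 hδ1 hC hreg.1 hreg.2 hℓ0 hℓ1 hKℓ hab hXcell hzleft hzright
    rw [hC'def]
    exact_mod_cast h1
  have hlen₁ := hlen a₁ b₁ (by omega) hrun₁ hPa₁ hPb₁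
  have hlen₂ := hlen a₂ b₂ (by omega) hrun₂ hPa₂ hPb₂
  -- conclusion
  refine ⟨(a₁:ℝ)*ℓ, ((b₁:ℝ)+1)*ℓ, (a₂:ℝ)*ℓ, ((b₂:ℝ)+1)*ℓ, hmk₁, hmk₂, ?_, ?_, ?_⟩
  · apply Set.Icc_subset_Icc
    · rw [hcMc]
      exact mul_le_mul_of_nonneg_right (by exact_mod_cast (by omega : Mc ≤ a₁)) hℓ0.le
    · rw [hdMd]
      refine mul_le_mul_of_nonneg_right ?_ hℓ0.le
      exact_mod_cast (show ((b₁+1:ℤ):ℝ) ≤ ((Md:ℤ):ℝ) by exact_mod_cast (by omega : b₁ + 1 ≤ Md))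
  · apply Set.Icc_subset_Icc
    · rw [hcMc]
      exact mul_le_mul_of_nonneg_right (by exact_mod_cast (by omega : Mc ≤ a₂)) hℓ0.le
    · rw [hdMd]
      refine mul_le_mul_of_nonneg_right ?_ hℓ0.le
      exact_mod_cast (show ((b₂+1:ℤ):ℝ) ≤ ((Md:ℤ):ℝ) by exact_mod_cast (by omega : b₂ + 1 ≤ Md))
  · intro x' hx' x'' hx''
    have hx'm := Set.mem_Icc.mp hx'
    have hx''m := Set.mem_Icc.mp hx''
    have hm₀a₁ : (a₁:ℝ) ≤ (m₀:ℝ) := by exact_mod_cast ha₁m₀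
    have hm₀b₁' : ((m₀:ℝ)+1) ≤ ((b₁:ℝ)+1) := by
      have : (m₀:ℝ) ≤ (b₁:ℝ) := by exact_mod_cast hm₀b₁
      linarith only [this]
    have hx₀1 : (a₁:ℝ)*ℓ ≤ x₀ := le_trans (mul_le_mul_of_nonneg_right hm₀a₁ hℓ0.le) hx₀mem.1
    have hx₀2 : x₀ ≤ ((b₁:ℝ)+1)*ℓ :=
      le_trans hx₀mem.2 (mul_le_mul_of_nonneg_right hm₀b₁' hℓ0.le)
    have hj₁a₂ : (a₂:ℝ) ≤ (j₁:ℝ) := by exact_mod_cast ha₂j₁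
    have hj₁b₂' : ((j₁:ℝ)+1) ≤ ((b₂:ℝ)+1) := by
      have : (j₁:ℝ) ≤ (b₂:ℝ) := by exact_mod_cast hj₁b₂
      linarith only [this]
    have hy1 : (a₂:ℝ)*ℓ ≤ y := le_trans (mul_le_mul_of_nonneg_right hj₁a₂ hℓ0.le) hycell.1
    have hy2 : y ≤ ((b₂:ℝ)+1)*ℓ :=
      le_trans hycell.2 (mul_le_mul_of_nonneg_right hj₁b₂' hℓ0.le)
    have hlenR₁ : ((b₁:ℝ)+1) * ℓ - (a₁:ℝ)*ℓ ≤ C' * ℓ := by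
      have h2 := mul_le_mul_of_nonneg_right hlen₁ hℓ0.le
      linarith only [h2]
    have hlenR₂ : ((b₂:ℝ)+1) * ℓ - (a₂:ℝ)*ℓ ≤ C' * ℓ := by
      have h2 := mul_le_mul_of_nonneg_right hlen₂ hℓ0.le
      linarith only [h2]
    have hd1 : |x' - x₀| ≤ C' * ℓ :=
      abs_le.mpr ⟨by linarith only [hx'm.1, hx₀2, hlenR₁],
        by linarith only [hx'm.2, hx₀1, hlenR₁]⟩
    have hd2 : |x'' - y| ≤ C' * ℓ :=
      abs_le.mpr ⟨by linarith only [hx''m.1, hy2, hlenR₂],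
        by linarith only [hx''m.2, hy1, hlenR₂]⟩
    have ht1 : |y - x₀| ≤ |y - x''| + |x'' - x'| + |x' - x₀| := by
      calc |y - x₀| ≤ |y - x'| + |x' - x₀| := abs_sub_le y x' x₀
        _ ≤ (|y - x''| + |x'' - x'|) + |x' - x₀| := add_le_add_left (abs_sub_le y x'' x') _
    have ht2 : |x' - x''| ≤ |x' - x₀| + |x₀ - y| + |y - x''| := by
      calc |x' - x''| ≤ |x' - y| + |y - x''| := abs_sub_le x' y x''
        _ ≤ (|x' - x₀| + |x₀ - y|) + |y - x''| := add_le_add_left (abs_sub_le x' x₀ y) _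
    have hcomm1 : |y - x''| = |x'' - y| := abs_sub_comm y x''
    have hcomm2 : |x'' - x'| = |x' - x''| := abs_sub_comm x'' x'
    have hcomm3 : |x₀ - y| = |y - x₀| := abs_sub_comm x₀ y
    have hC2ρ : C2 * ρ ≤ 1 * ρ := mul_le_mul_of_nonneg_right hC21 hρ0.le
    constructor
    · linarith only [ht1, hcomm1, hcomm2, hd1, hd2, hylow, h2C'ℓ, hr'def]
    · linarith only [ht2, hcomm3, hcomm1, hd1, hd2, hyup, h2C'ℓ, hrdef, hC2ρ, hρ0]
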